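/- Let ℓ be a prime and m ≥ 0, n ≥ 1 integers. In GSp₄(ℚ_ℓ) one has the double coset decomposition B^{(1)}_{m,n} · diag(ℓ², ℓ, ℓ, 1) · B^{(1)}_{m,n} = ⋃ M(x,y,z) · B^{(1)}_{m,n}, where M(x,y,z) is the matrix with rows (ℓ², ℓx, ℓy, z), (0, ℓ, 0, y), (0, 0, ℓ, −x), (0, 0, 0, 1) and the union is over 0 ≤ x, y < ℓ and 0 ≤ z < ℓ²; the ℓ⁴ listed left cosets are pairwise distinct. -/

import Mathlib

open Pointwise

noncomputable section

/-- The standard skew-symmetric matrix `J` defining `GSp₄`. -/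
def Jmat (p : ℕ) [Fact p.Prime] : Matrix (Fin 4) (Fin 4) ℚ_[p] :=
  !![0, 0, 0, 1; 0, 0, 1, 0; 0, -1, 0, 0; -1, 0, 0, 0]

/-- The subgroup `B^{(1)}_{m,n}` of `GSp₄(ℤ_ℓ)`: integral symplectic similitudes with
multiplier `μ ≡ 1 (mod ℓ^m)`, all entries below the diagonal divisible by `ℓⁿ`, and
(4,4)-entry `≡ 1 (mod ℓⁿ)`, viewed inside the 4×4 matrices over `ℚ_ℓ`. -/
def Bmn1 (p : ℕ) [Fact p.Prime] (m n : ℕ) : Set (Matrix (Fin 4) (Fin 4) ℚ_[p]) :=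
  {g | (∀ i j, ‖g i j‖ ≤ 1) ∧ ‖g.det‖ = 1 ∧
    (∃ μ : ℚ_[p], ‖μ‖ = 1 ∧ ‖μ - 1‖ ≤ (p : ℝ) ^ (-(m : ℤ)) ∧
      g.transpose * Jmat p * g = μ • Jmat p) ∧
    ‖g 1 0‖ ≤ (p : ℝ) ^ (-(n : ℤ)) ∧ ‖g 2 0‖ ≤ (p : ℝ) ^ (-(n : ℤ)) ∧
    ‖g 2 1‖ ≤ (p : ℝ) ^ (-(n : ℤ)) ∧ ‖g 3 0‖ ≤ (p : ℝ) ^ (-(n : ℤ)) ∧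
    ‖g 3 1‖ ≤ (p : ℝ) ^ (-(n : ℤ)) ∧ ‖g 3 2‖ ≤ (p : ℝ) ^ (-(n : ℤ)) ∧
    ‖g 3 3 - 1‖ ≤ (p : ℝ) ^ (-(n : ℤ))}

/-- The coset representatives `M(x,y,z)` for `0 ≤ x,y < ℓ`, `0 ≤ z < ℓ²`. -/
def rep9 (p : ℕ) [Fact p.Prime] :
    Fin p × Fin p × Fin (p ^ 2) → Matrix (Fin 4) (Fin 4) ℚ_[p] :=
  fun i => !![(p : ℚ_[p]) ^ 2, (p : ℚ_[p]) * ((i.1 : ℕ) : ℚ_[p]),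
                (p : ℚ_[p]) * ((i.2.1 : ℕ) : ℚ_[p]), ((i.2.2 : ℕ) : ℚ_[p]);
              0, (p : ℚ_[p]), 0, ((i.2.1 : ℕ) : ℚ_[p]);
              0, 0, (p : ℚ_[p]), -((i.1 : ℕ) : ℚ_[p]);
              0, 0, 0, 1]


namespace Stmt9Aux
variable {p : ℕ} [Fact p.Prime]
open Matrix

lemma one_lt_pR : (1:ℝ) < p := by exact_mod_cast (Fact.out : p.Prime).one_lt
lemma pR_pos : (0:ℝ) < p := lt_trans one_pos one_lt_pR
lemma pq_ne : ((p:ℚ_[p])) ≠ 0 := by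
  exact_mod_cast Nat.cast_ne_zero.mpr (Fact.out : p.Prime).ne_zero

lemma nadd {a b : ℚ_[p]} {c : ℝ} (ha : ‖a‖ ≤ c) (hb : ‖b‖ ≤ c) : ‖a + b‖ ≤ c :=
  (Padic.nonarchimedean a b).trans (max_le ha hb)

lemma nsub {a b : ℚ_[p]} {c : ℝ} (ha : ‖a‖ ≤ c) (hb : ‖b‖ ≤ c) : ‖a - b‖ ≤ c := by
  rw [sub_eq_add_neg]; exact nadd ha (by simpa using hb)

lemma nmul₁ {a b : ℚ_[p]} {c : ℝ} (ha : ‖a‖ ≤ 1) (hb : ‖b‖ ≤ c) : ‖a * b‖ ≤ c := by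
  rw [norm_mul]
  calc ‖a‖ * ‖b‖ ≤ 1 * ‖b‖ := mul_le_mul_of_nonneg_right ha (norm_nonneg _)
  _ = ‖b‖ := one_mul _
  _ ≤ c := hb

lemma nmul₂ {a b : ℚ_[p]} {c : ℝ} (ha : ‖a‖ ≤ c) (hb : ‖b‖ ≤ 1) : ‖a * b‖ ≤ c := by
  rw [mul_comm]; exact nmul₁ hb ha

lemma nnat (k : ℕ) : ‖((k:ℕ) : ℚ_[p])‖ ≤ 1 := by
  have := Padic.norm_int_le_one (p := p) (k : ℤ)
  simpa using this

lemma zpow_le_one' {j : ℕ} : ((p:ℝ)) ^ (-(j:ℤ)) ≤ 1 := by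
  apply zpow_le_one_of_nonpos₀ (le_of_lt one_lt_pR) (by omega)

lemma zpow_anti {j k : ℕ} (h : j ≤ k) : ((p:ℝ)) ^ (-(k:ℤ)) ≤ (p:ℝ) ^ (-(j:ℤ)) := by
  apply zpow_le_zpow_right₀ (le_of_lt one_lt_pR) (by omega)

lemma zpow_lt_one {j : ℕ} (hj : 1 ≤ j) : ((p:ℝ)) ^ (-(j:ℤ)) < 1 := by
  apply zpow_lt_one_of_neg₀ one_lt_pR (by omega)

lemma norm_p' : ‖(p : ℚ_[p])‖ = (p:ℝ) ^ (-(1:ℤ)) := by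
  rw [Padic.norm_p]; simp

lemma exists_appr (t : ℚ_[p]) (ht : ‖t‖ ≤ 1) (j : ℕ) :
    ∃ k : ℕ, k < p ^ j ∧ ‖t - (k : ℚ_[p])‖ ≤ (p:ℝ) ^ (-(j:ℤ)) := by
  set T : ℤ_[p] := ⟨t, ht⟩ with hT
  refine ⟨T.appr j, T.appr_lt j, ?_⟩
  have hs := PadicInt.appr_spec j T
  rw [Ideal.mem_span_singleton] at hs
  obtain ⟨c, hc⟩ := hs
  have : t - ((T.appr j : ℕ) : ℚ_[p]) = ((T - (T.appr j : ℕ) : ℤ_[p]) : ℚ_[p]) := by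
    rw [PadicInt.coe_sub, PadicInt.coe_natCast]
  rw [this, hc]
  push_cast
  rw [norm_mul, Padic.norm_p_pow]
  calc ((p:ℝ))^(-(j:ℤ)) * ‖(c:ℚ_[p])‖ ≤ ((p:ℝ))^(-(j:ℤ)) * 1 := by
        apply mul_le_mul_of_nonneg_left (PadicInt.norm_le_one c) (le_of_lt (zpow_pos pR_pos _))
  _ = _ := mul_one _

lemma jmat_symp {A B : Matrix (Fin 4) (Fin 4) ℚ_[p]} {α β : ℚ_[p]}
    (hA : A.transpose * Jmat p * A = α • Jmat p)
    (hB : B.transpose * Jmat p * B = β • Jmat p) :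
    (A * B).transpose * Jmat p * (A * B) = (α * β) • Jmat p := by
  rw [transpose_mul]
  calc B.transpose * A.transpose * Jmat p * (A * B)
      = B.transpose * (A.transpose * Jmat p * A) * B := by
        simp only [Matrix.mul_assoc]
  _ = B.transpose * (α • Jmat p) * B := by rw [hA]
  _ = α • (B.transpose * Jmat p * B) := by
        rw [Matrix.mul_smul, Matrix.smul_mul]
  _ = α • (β • Jmat p) := by rw [hB]
  _ = (α * β) • Jmat p := by rw [smul_smul]

lemma mul_mem {m n : ℕ} {A B : Matrix (Fin 4) (Fin 4) ℚ_[p]}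
    (hA : A ∈ Bmn1 p m n) (hB : B ∈ Bmn1 p m n) : A * B ∈ Bmn1 p m n := by
  obtain ⟨aE, adet, ⟨α, hα1, hαm, hαr⟩, a10, a20, a21, a30, a31, a32, a33⟩ := hA
  obtain ⟨bE, bdet, ⟨β, hβ1, hβm, hβr⟩, b10, b20, b21, b30, b31, b32, b33⟩ := hB
  refine ⟨?_, ?_, ⟨α * β, ?_, ?_, jmat_symp hαr hβr⟩, ?_, ?_, ?_, ?_, ?_, ?_, ?_⟩
  · intro i j
    rw [Matrix.mul_apply, Fin.sum_univ_four]
    exact nadd (nadd (nadd (nmul₁ (aE _ _) (bE _ _)) (nmul₁ (aE _ _) (bE _ _)))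
      (nmul₁ (aE _ _) (bE _ _))) (nmul₁ (aE _ _) (bE _ _))
  · rw [Matrix.det_mul, norm_mul, adet, bdet, one_mul]
  · rw [norm_mul, hα1, hβ1, one_mul]
  · have : α * β - 1 = α * (β - 1) + (α - 1) := by ring
    rw [this]
    exact nadd (nmul₁ (le_of_eq hα1) hβm) hαm
  · rw [Matrix.mul_apply, Fin.sum_univ_four]
    exact nadd (nadd (nadd (nmul₂ a10 (bE _ _)) (nmul₁ (aE _ _) b10))
      (nmul₁ (aE _ _) b20)) (nmul₁ (aE _ _) b30)
  · rw [Matrix.mul_apply, Fin.sum_univ_four]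
    exact nadd (nadd (nadd (nmul₂ a20 (bE _ _)) (nmul₂ a21 (bE _ _)))
      (nmul₁ (aE _ _) b20)) (nmul₁ (aE _ _) b30)
  · rw [Matrix.mul_apply, Fin.sum_univ_four]
    exact nadd (nadd (nadd (nmul₂ a20 (bE _ _)) (nmul₂ a21 (bE _ _)))
      (nmul₁ (aE _ _) b21)) (nmul₁ (aE _ _) b31)
  · rw [Matrix.mul_apply, Fin.sum_univ_four]
    exact nadd (nadd (nadd (nmul₂ a30 (bE _ _)) (nmul₂ a31 (bE _ _)))
      (nmul₂ a32 (bE _ _))) (nmul₁ (aE _ _) b30)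
  · rw [Matrix.mul_apply, Fin.sum_univ_four]
    exact nadd (nadd (nadd (nmul₂ a30 (bE _ _)) (nmul₂ a31 (bE _ _)))
      (nmul₂ a32 (bE _ _))) (nmul₁ (aE _ _) b31)
  · rw [Matrix.mul_apply, Fin.sum_univ_four]
    exact nadd (nadd (nadd (nmul₂ a30 (bE _ _)) (nmul₂ a31 (bE _ _)))
      (nmul₂ a32 (bE _ _))) (nmul₁ (aE _ _) b32)
  · rw [Matrix.mul_apply, Fin.sum_univ_four]
    have : A 3 0 * B 0 3 + A 3 1 * B 1 3 + A 3 2 * B 2 3 + A 3 3 * B 3 3 - 1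
        = ((A 3 0 * B 0 3 + A 3 1 * B 1 3) + A 3 2 * B 2 3) +
          (A 3 3 * (B 3 3 - 1) + (A 3 3 - 1)) := by ring
    rw [this]
    exact nadd (nadd (nadd (nmul₂ a30 (bE _ _)) (nmul₂ a31 (bE _ _))) (nmul₂ a32 (bE _ _)))
      (nadd (nmul₁ (aE _ _) b33) a33)

lemma one_mem {m n : ℕ} : (1 : Matrix (Fin 4) (Fin 4) ℚ_[p]) ∈ Bmn1 p m n := by
  have h0 : ∀ j : ℕ, (0:ℝ) ≤ (p:ℝ) ^ (-(j:ℤ)) := fun j => le_of_lt (zpow_pos pR_pos _)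
  refine ⟨?_, ?_, ⟨1, ?_, ?_, ?_⟩, ?_, ?_, ?_, ?_, ?_, ?_, ?_⟩ <;>
    simp [Matrix.one_apply, h0]
  · intro i j; split <;> simp

def Umat (p : ℕ) [Fact p.Prime] (x y z : ℚ_[p]) : Matrix (Fin 4) (Fin 4) ℚ_[p] :=
  !![1, x, y, z; 0, 1, 0, y; 0, 0, 1, -x; 0, 0, 0, 1]

def Dmat (p : ℕ) [Fact p.Prime] : Matrix (Fin 4) (Fin 4) ℚ_[p] :=
  Matrix.diagonal ![(p : ℚ_[p]) ^ 2, (p : ℚ_[p]), (p : ℚ_[p]), 1]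

set_option maxHeartbeats 1000000 in
lemma Umat_symp (x y z : ℚ_[p]) :
    (Umat p x y z).transpose * Jmat p * Umat p x y z = (1:ℚ_[p]) • Jmat p := by
  ext i j
  rw [Matrix.mul_apply, Matrix.smul_apply]
  simp only [Matrix.mul_apply, Fin.sum_univ_four, Matrix.transpose_apply]
  fin_cases i <;> fin_cases j <;>
    simp [Umat, Jmat, Matrix.vecHead, Matrix.vecTail] <;> ring

set_option maxHeartbeats 1000000 in
lemma Dmat_symp :
    (Dmat p).transpose * Jmat p * Dmat p = ((p:ℚ_[p])^2) • Jmat p := by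
  ext i j
  rw [Matrix.mul_apply, Matrix.smul_apply]
  simp only [Matrix.mul_apply, Fin.sum_univ_four, Matrix.transpose_apply]
  fin_cases i <;> fin_cases j <;>
    simp [Dmat, Jmat, Matrix.diagonal, Matrix.vecHead, Matrix.vecTail] <;> ring

lemma Umat_det (x y z : ℚ_[p]) : (Umat p x y z).det = 1 := by
  simp [Umat, Matrix.det_succ_row_zero, Fin.sum_univ_succ]

lemma Dmat_det : (Dmat p).det = (p:ℚ_[p])^4 := by
  simp [Dmat, Matrix.det_diagonal, Fin.prod_univ_four]; ring

set_option maxHeartbeats 1000000 in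
lemma Umat_mem {m n : ℕ} (x y z : ℕ) : Umat p (x:ℚ_[p]) (y:ℚ_[p]) (z:ℚ_[p]) ∈ Bmn1 p m n := by
  have h0 : ∀ j : ℕ, (0:ℝ) ≤ (p:ℝ) ^ (-(j:ℤ)) := fun j => le_of_lt (zpow_pos pR_pos _)
  refine ⟨?_, ?_, ⟨1, by simp, by simpa using h0 m, Umat_symp _ _ _⟩, ?_, ?_, ?_, ?_, ?_, ?_, ?_⟩
  · intro i j
    fin_cases i <;> fin_cases j <;>
      simp [Umat, Matrix.vecHead, Matrix.vecTail] <;> exact nnat _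
  · rw [Umat_det]; simp
  all_goals
    simp [Umat, Matrix.vecHead, Matrix.vecTail]
  all_goals positivity

set_option maxHeartbeats 1000000 in
lemma rep9_eq (i : Fin p × Fin p × Fin (p^2)) :
    rep9 p i = Umat p ((i.1:ℕ):ℚ_[p]) ((i.2.1:ℕ):ℚ_[p]) ((i.2.2:ℕ):ℚ_[p]) * Dmat p := by
  ext a b
  rw [Matrix.mul_apply]
  simp only [Fin.sum_univ_four]
  fin_cases a <;> fin_cases b <;>
    simp [rep9, Umat, Dmat, Matrix.diagonal, Matrix.vecHead, Matrix.vecTail] <;> ring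

lemma rep9_symp (i : Fin p × Fin p × Fin (p^2)) :
    (rep9 p i).transpose * Jmat p * rep9 p i = ((p:ℚ_[p])^2) • Jmat p := by
  rw [rep9_eq]
  have := jmat_symp (Umat_symp (p := p) ((i.1:ℕ):ℚ_[p]) ((i.2.1:ℕ):ℚ_[p]) ((i.2.2:ℕ):ℚ_[p]))
    (Dmat_symp (p := p))
  simpa using this

lemma rep9_det (i : Fin p × Fin p × Fin (p^2)) : (rep9 p i).det = (p:ℚ_[p])^4 := by
  rw [rep9_eq, Matrix.det_mul, Umat_det, Dmat_det, one_mul]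

lemma ndiv1 {e : ℚ_[p]} (he : ‖e‖ ≤ (p:ℝ)^(-(1:ℤ))) : ‖e / (p:ℚ_[p])‖ ≤ 1 := by
  rw [norm_div, norm_p', div_le_one (zpow_pos pR_pos _)]
  simpa using he

lemma ndiv2 {e : ℚ_[p]} (he : ‖e‖ ≤ (p:ℝ)^(-(2:ℤ))) : ‖e / (p:ℚ_[p])^2‖ ≤ 1 := by
  rw [norm_div, show ((p:ℚ_[p])^2) = (p:ℚ_[p])^(2:ℕ) by norm_num, Padic.norm_p_pow,
    div_le_one (zpow_pos pR_pos _)]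
  simpa using he

set_option maxHeartbeats 2000000 in
lemma main_decomp {m n : ℕ} (hn : 1 ≤ n) {b : Matrix (Fin 4) (Fin 4) ℚ_[p]}
    (hb : b ∈ Bmn1 p m n) :
    ∃ i : Fin p × Fin p × Fin (p^2), ∃ h ∈ Bmn1 p m n, rep9 p i * h = b * Dmat p := by
  obtain ⟨bE, bdet, ⟨μ, hμ1, hμm, hμr⟩, b10, b20, b21, b30, b31, b32, b33⟩ := hb
  have hq : ((p:ℚ_[p])) ≠ 0 := pq_ne
  have hqp1 : ‖(p:ℚ_[p])‖ ≤ 1 := by rw [norm_p']; exact zpow_le_one'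
  have pn_lt1 : ((p:ℝ))^(-(n:ℤ)) < 1 := zpow_lt_one hn
  have pn1 : ∀ {a : ℚ_[p]}, ‖a‖ ≤ (p:ℝ)^(-(n:ℤ)) → ‖a‖ ≤ (p:ℝ)^(-(1:ℤ)) :=
    fun h => h.trans (zpow_anti hn)
  have pn0 : ∀ {a : ℚ_[p]}, ‖a‖ ≤ (p:ℝ)^(-(n:ℤ)) → ‖a‖ ≤ 1 :=
    fun h => h.trans zpow_le_one'
  have hb33 : ‖b 3 3‖ = 1 := by
    have e : b 3 3 = (b 3 3 - 1) + 1 := by ring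
    rw [e, Padic.add_eq_max_of_ne, norm_one, max_eq_right
      (le_of_lt (lt_of_le_of_lt b33 pn_lt1))]
    rw [norm_one]
    exact ne_of_lt (lt_of_le_of_lt b33 pn_lt1)
  have hb33ne : b 3 3 ≠ 0 := by
    intro h0; rw [h0] at hb33; simp at hb33
  have hb33inv : ‖(b 3 3)⁻¹‖ ≤ 1 := by rw [norm_inv, hb33]; norm_num
  -- symplectic relations
  have R13 : b 0 1 * b 3 3 + b 1 1 * b 2 3 - b 2 1 * b 1 3 - b 3 1 * b 0 3 = 0 := by
    have R := congr_fun (congr_fun hμr 1) 3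
    simp [Jmat, Matrix.mul_apply, Fin.sum_univ_four, Matrix.transpose_apply,
      Matrix.smul_apply, Matrix.vecHead, Matrix.vecTail] at R
    linear_combination R
  have R23 : b 0 2 * b 3 3 + b 1 2 * b 2 3 - b 2 2 * b 1 3 - b 3 2 * b 0 3 = 0 := by
    have R := congr_fun (congr_fun hμr 2) 3
    simp [Jmat, Matrix.mul_apply, Fin.sum_univ_four, Matrix.transpose_apply,
      Matrix.smul_apply, Matrix.vecHead, Matrix.vecTail] at R
    linear_combination R
  -- approximations
  set X : ℚ_[p] := -(b 2 3) * (b 3 3)⁻¹ with hX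
  set Y : ℚ_[p] := (b 1 3) * (b 3 3)⁻¹ with hY
  have hXle : ‖X‖ ≤ 1 := by
    rw [hX]; exact nmul₂ (by simpa using bE 2 3) hb33inv
  have hYle : ‖Y‖ ≤ 1 := by rw [hY]; exact nmul₂ (bE 1 3) hb33inv
  obtain ⟨nx, hnxlt, hnx⟩ := exists_appr X hXle 1
  obtain ⟨ny, hnylt, hny⟩ := exists_appr Y hYle 1
  set xq : ℚ_[p] := (nx : ℚ_[p]) with hxq
  set yq : ℚ_[p] := (ny : ℚ_[p]) with hyq
  have hx1 : ‖xq‖ ≤ 1 := nnat nx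
  have hy1 : ‖yq‖ ≤ 1 := nnat ny
  set Z : ℚ_[p] := (b 0 3 - xq * b 1 3 - yq * b 2 3) * (b 3 3)⁻¹ with hZ
  have hZle : ‖Z‖ ≤ 1 := by
    rw [hZ]
    exact nmul₂ (nsub (nsub (bE 0 3) (nmul₁ hx1 (bE 1 3))) (nmul₁ hy1 (bE 2 3))) hb33inv
  obtain ⟨nz, hnzlt, hnz⟩ := exists_appr Z hZle 2
  set zq : ℚ_[p] := (nz : ℚ_[p]) with hzq
  have hz1 : ‖zq‖ ≤ 1 := nnat nz
  rw [pow_one] at hnxlt hnylt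
  -- the key norm bounds
  have E01 : ‖b 0 1 - xq * b 1 1 - yq * b 2 1 - zq * b 3 1‖ ≤ (p:ℝ)^(-(1:ℤ)) := by
    have key : b 0 1 - X * b 1 1 = (b 2 1 * b 1 3 + b 3 1 * b 0 3) * (b 3 3)⁻¹ := by
      rw [hX]; field_simp; linear_combination R13
    have e : b 0 1 - xq * b 1 1 - yq * b 2 1 - zq * b 3 1
        = (((b 0 1 - X * b 1 1) - (X - xq) * b 1 1 * (-1)) - yq * b 2 1) - zq * b 3 1 := by
      ring
    rw [e, key]
    refine nsub (nsub (nsub ?_ ?_) ?_) ?_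
    · exact pn1 (nmul₂ (nadd (nmul₂ b21 (bE 1 3)) (nmul₂ b31 (bE 0 3))) hb33inv)
    · exact nmul₂ (nmul₂ (by simpa using hnx) (bE 1 1)) (by norm_num)
    · exact pn1 (nmul₁ hy1 b21)
    · exact pn1 (nmul₁ hz1 b31)
  have E02 : ‖b 0 2 - xq * b 1 2 - yq * b 2 2 - zq * b 3 2‖ ≤ (p:ℝ)^(-(1:ℤ)) := by
    have key : b 0 2 - X * b 1 2 - Y * b 2 2 = (b 3 2 * b 0 3) * (b 3 3)⁻¹ := by
      rw [hX, hY]; field_simp; linear_combination R23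
    have e : b 0 2 - xq * b 1 2 - yq * b 2 2 - zq * b 3 2
        = (((b 0 2 - X * b 1 2 - Y * b 2 2) - (X - xq) * b 1 2 * (-1))
            - (Y - yq) * b 2 2 * (-1)) - zq * b 3 2 := by ring
    rw [e, key]
    refine nsub (nsub (nsub ?_ ?_) ?_) ?_
    · exact pn1 (nmul₂ (nmul₂ b32 (bE 0 3)) hb33inv)
    · exact nmul₂ (nmul₂ (by simpa using hnx) (bE 1 2)) (by norm_num)
    · exact nmul₂ (nmul₂ (by simpa using hny) (bE 2 2)) (by norm_num)
    · exact pn1 (nmul₁ hz1 b32)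
  have E03 : ‖b 0 3 - xq * b 1 3 - yq * b 2 3 - zq * b 3 3‖ ≤ (p:ℝ)^(-(2:ℤ)) := by
    have e : b 0 3 - xq * b 1 3 - yq * b 2 3 - zq * b 3 3 = (Z - zq) * b 3 3 := by
      rw [hZ]; field_simp
    rw [e]
    exact nmul₂ (by simpa using hnz) (le_of_eq hb33)
  have E13 : ‖b 1 3 - yq * b 3 3‖ ≤ (p:ℝ)^(-(1:ℤ)) := by
    have e : b 1 3 - yq * b 3 3 = (Y - yq) * b 3 3 := by rw [hY]; field_simp
    rw [e]
    exact nmul₂ (by simpa using hny) (le_of_eq hb33)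
  have E23 : ‖b 2 3 + xq * b 3 3‖ ≤ (p:ℝ)^(-(1:ℤ)) := by
    have e : b 2 3 + xq * b 3 3 = -((X - xq) * b 3 3) := by rw [hX]; field_simp; ring
    rw [e, norm_neg]
    exact nmul₂ (by simpa using hnx) (le_of_eq hb33)
  -- entries of h
  obtain ⟨h00, hh00⟩ : ∃ t : ℚ_[p], t = b 0 0 - xq * b 1 0 - yq * b 2 0 - zq * b 3 0 := ⟨_, rfl⟩
  obtain ⟨h01, hh01⟩ : ∃ t : ℚ_[p], t = (b 0 1 - xq * b 1 1 - yq * b 2 1 - zq * b 3 1) / (p:ℚ_[p]) := ⟨_, rfl⟩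
  obtain ⟨h02, hh02⟩ : ∃ t : ℚ_[p], t = (b 0 2 - xq * b 1 2 - yq * b 2 2 - zq * b 3 2) / (p:ℚ_[p]) := ⟨_, rfl⟩
  obtain ⟨h03, hh03⟩ : ∃ t : ℚ_[p], t = (b 0 3 - xq * b 1 3 - yq * b 2 3 - zq * b 3 3) / (p:ℚ_[p])^2 := ⟨_, rfl⟩
  obtain ⟨h10, hh10⟩ : ∃ t : ℚ_[p], t = (p:ℚ_[p]) * (b 1 0 - yq * b 3 0) := ⟨_, rfl⟩
  obtain ⟨h11, hh11⟩ : ∃ t : ℚ_[p], t = b 1 1 - yq * b 3 1 := ⟨_, rfl⟩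
  obtain ⟨h12, hh12⟩ : ∃ t : ℚ_[p], t = b 1 2 - yq * b 3 2 := ⟨_, rfl⟩
  obtain ⟨h13, hh13⟩ : ∃ t : ℚ_[p], t = (b 1 3 - yq * b 3 3) / (p:ℚ_[p]) := ⟨_, rfl⟩
  obtain ⟨h20, hh20⟩ : ∃ t : ℚ_[p], t = (p:ℚ_[p]) * (b 2 0 + xq * b 3 0) := ⟨_, rfl⟩
  obtain ⟨h21, hh21⟩ : ∃ t : ℚ_[p], t = b 2 1 + xq * b 3 1 := ⟨_, rfl⟩
  obtain ⟨h22, hh22⟩ : ∃ t : ℚ_[p], t = b 2 2 + xq * b 3 2 := ⟨_, rfl⟩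
  obtain ⟨h23, hh23⟩ : ∃ t : ℚ_[p], t = (b 2 3 + xq * b 3 3) / (p:ℚ_[p]) := ⟨_, rfl⟩
  obtain ⟨h30, hh30⟩ : ∃ t : ℚ_[p], t = (p:ℚ_[p])^2 * b 3 0 := ⟨_, rfl⟩
  obtain ⟨h31, hh31⟩ : ∃ t : ℚ_[p], t = (p:ℚ_[p]) * b 3 1 := ⟨_, rfl⟩
  obtain ⟨h32, hh32⟩ : ∃ t : ℚ_[p], t = (p:ℚ_[p]) * b 3 2 := ⟨_, rfl⟩
  obtain ⟨h33, hh33⟩ : ∃ t : ℚ_[p], t = b 3 3 := ⟨_, rfl⟩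
  set H : Matrix (Fin 4) (Fin 4) ℚ_[p] :=
    !![h00, h01, h02, h03; h10, h11, h12, h13; h20, h21, h22, h23; h30, h31, h32, h33] with hH
  set i0 : Fin p × Fin p × Fin (p^2) := (⟨nx, hnxlt⟩, ⟨ny, hnylt⟩, ⟨nz, hnzlt⟩) with hi0
  have prodEq : rep9 p i0 * H = b * Dmat p := by
    ext a c
    simp only [Matrix.mul_apply, Fin.sum_univ_four]
    fin_cases a <;> fin_cases c <;>
      simp [hH, hi0, rep9, Dmat, Matrix.diagonal, Matrix.vecHead, Matrix.vecTail,
        hh00, hh01, hh02, hh03, hh10, hh11, hh12, hh13, hh20, hh21, hh22, hh23,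
        hh30, hh31, hh32, hh33] <;>
      (try field_simp) <;> (try ring)
  refine ⟨i0, H, ⟨?_, ?_, ⟨μ, hμ1, hμm, ?_⟩, ?_, ?_, ?_, ?_, ?_, ?_, ?_⟩, prodEq⟩
  · -- all entries integral
    have B00 : ‖h00‖ ≤ 1 := by
      rw [hh00]
      exact nsub (nsub (nsub (bE 0 0) (nmul₁ hx1 (bE 1 0))) (nmul₁ hy1 (bE 2 0)))
        (nmul₁ hz1 (bE 3 0))
    have B01 : ‖h01‖ ≤ 1 := by rw [hh01]; exact ndiv1 E01
    have B02 : ‖h02‖ ≤ 1 := by rw [hh02]; exact ndiv1 E02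
    have B03 : ‖h03‖ ≤ 1 := by rw [hh03]; exact ndiv2 E03
    have B10 : ‖h10‖ ≤ 1 := by
      rw [hh10]; exact nmul₁ hqp1 (nsub (bE 1 0) (nmul₁ hy1 (bE 3 0)))
    have B11 : ‖h11‖ ≤ 1 := by rw [hh11]; exact nsub (bE 1 1) (nmul₁ hy1 (bE 3 1))
    have B12 : ‖h12‖ ≤ 1 := by rw [hh12]; exact nsub (bE 1 2) (nmul₁ hy1 (bE 3 2))
    have B13 : ‖h13‖ ≤ 1 := by rw [hh13]; exact ndiv1 E13
    have B20 : ‖h20‖ ≤ 1 := by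
      rw [hh20]; exact nmul₁ hqp1 (nadd (bE 2 0) (nmul₁ hx1 (bE 3 0)))
    have B21 : ‖h21‖ ≤ 1 := by rw [hh21]; exact nadd (bE 2 1) (nmul₁ hx1 (bE 3 1))
    have B22 : ‖h22‖ ≤ 1 := by rw [hh22]; exact nadd (bE 2 2) (nmul₁ hx1 (bE 3 2))
    have B23 : ‖h23‖ ≤ 1 := by rw [hh23]; exact ndiv1 E23
    have B30 : ‖h30‖ ≤ 1 := by
      rw [hh30]; exact nmul₁ (by rw [norm_pow]; exact pow_le_one₀ (norm_nonneg _) hqp1) (bE 3 0)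
    have B31 : ‖h31‖ ≤ 1 := by rw [hh31]; exact nmul₁ hqp1 (bE 3 1)
    have B32 : ‖h32‖ ≤ 1 := by rw [hh32]; exact nmul₁ hqp1 (bE 3 2)
    have B33 : ‖h33‖ ≤ 1 := by rw [hh33]; exact bE 3 3
    intro i j
    fin_cases i <;> fin_cases j <;>
      simp only [hH, Matrix.cons_val', Matrix.cons_val_zero, Matrix.cons_val_one,
        Matrix.head_cons, Matrix.empty_val', Matrix.cons_val_fin_one, Matrix.head_fin_const,
        Matrix.of_apply, Matrix.vecHead, Matrix.vecTail, Function.comp_apply,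
        Fin.mk_zero, Fin.mk_one] <;>
      assumption
  · -- determinant
    have hdet : (p:ℚ_[p])^4 * H.det = (p:ℚ_[p])^4 * b.det := by
      have e := congrArg Matrix.det prodEq
      rw [Matrix.det_mul, Matrix.det_mul, rep9_det, Dmat_det] at e
      rw [e]; ring
    rw [mul_left_cancel₀ (pow_ne_zero 4 hq) hdet]
    exact bdet
  · -- symplectic similitude
    have L : (rep9 p i0 * H).transpose * Jmat p * (rep9 p i0 * H)
        = ((p:ℚ_[p])^2) • (H.transpose * Jmat p * H) := by
      rw [Matrix.transpose_mul]
      calc H.transpose * (rep9 p i0).transpose * Jmat p * (rep9 p i0 * H)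
          = H.transpose * ((rep9 p i0).transpose * Jmat p * rep9 p i0) * H := by
            simp only [Matrix.mul_assoc]
      _ = H.transpose * (((p:ℚ_[p])^2) • Jmat p) * H := by rw [rep9_symp]
      _ = ((p:ℚ_[p])^2) • (H.transpose * Jmat p * H) := by
            rw [Matrix.mul_smul, Matrix.smul_mul]
    have R : (b * Dmat p).transpose * Jmat p * (b * Dmat p)
        = ((p:ℚ_[p])^2) • (μ • Jmat p) := by
      rw [jmat_symp hμr (Dmat_symp (p := p)), smul_smul, mul_comm]
    have e : ((p:ℚ_[p])^2) • (H.transpose * Jmat p * H) = ((p:ℚ_[p])^2) • (μ • Jmat p) := by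
      rw [← L, prodEq, R]
    exact smul_right_injective _ (pow_ne_zero 2 hq) e
  · -- lower entries
    show ‖H 1 0‖ ≤ _
    have : H 1 0 = h10 := by simp [hH]
    rw [this, hh10]
    exact nmul₁ hqp1 (nsub b10 (nmul₁ hy1 b30))
  · show ‖H 2 0‖ ≤ _
    have : H 2 0 = h20 := by simp [hH]
    rw [this, hh20]
    exact nmul₁ hqp1 (nadd b20 (nmul₁ hx1 b30))
  · show ‖H 2 1‖ ≤ _
    have : H 2 1 = h21 := by simp [hH]
    rw [this, hh21]
    exact nadd b21 (nmul₁ hx1 b31)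
  · show ‖H 3 0‖ ≤ _
    have : H 3 0 = h30 := by simp [hH]
    rw [this, hh30]
    exact nmul₁ (by rw [norm_pow]; exact pow_le_one₀ (norm_nonneg _) hqp1) b30
  · show ‖H 3 1‖ ≤ _
    have : H 3 1 = h31 := by simp [hH]
    rw [this, hh31]
    exact nmul₁ hqp1 b31
  · show ‖H 3 2‖ ≤ _
    have : H 3 2 = h32 := by simp [hH]
    rw [this, hh32]
    exact nmul₁ hqp1 b32
  · show ‖H 3 3 - 1‖ ≤ _
    have : H 3 3 = h33 := by simp [hH]
    rw [this, hh33]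
    exact b33

end Stmt9Aux

set_option maxHeartbeats 1000000 in
/-- Double coset decomposition of `B^{(1)}_{m,n} · diag(ℓ²,ℓ,ℓ,1) · B^{(1)}_{m,n}` into
`ℓ⁴` pairwise distinct left cosets. -/
theorem stmt9 (p : ℕ) [Fact p.Prime] (m n : ℕ) (hn : 1 ≤ n) :
    (Bmn1 p m n *
        {Matrix.diagonal ![(p : ℚ_[p]) ^ 2, (p : ℚ_[p]), (p : ℚ_[p]), 1]} * Bmn1 p m n =
      ⋃ i : Fin p × Fin p × Fin (p ^ 2),
        ({rep9 p i} : Set (Matrix (Fin 4) (Fin 4) ℚ_[p])) * Bmn1 p m n) ∧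
    Function.Injective
      (fun i : Fin p × Fin p × Fin (p ^ 2) =>
        ({rep9 p i} : Set (Matrix (Fin 4) (Fin 4) ℚ_[p])) * Bmn1 p m n) := by
  have hD : Matrix.diagonal ![(p : ℚ_[p]) ^ 2, (p : ℚ_[p]), (p : ℚ_[p]), 1] = Stmt9Aux.Dmat p := rfl
  constructor
  · ext s
    constructor
    · intro hs
      obtain ⟨u, hu, b2, hb2, rfl⟩ := Set.mem_mul.1 hs
      obtain ⟨b1, hb1, d, hd, rfl⟩ := Set.mem_mul.1 hu
      rw [Set.mem_singleton_iff] at hd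
      subst hd
      obtain ⟨i, h, hh, hEq⟩ := Stmt9Aux.main_decomp hn hb1
      refine Set.mem_iUnion.2 ⟨i, Set.mem_mul.2 ⟨rep9 p i, rfl, h * b2, Stmt9Aux.mul_mem hh hb2, ?_⟩⟩
      rw [← mul_assoc, hEq, hD]
    · intro hs
      obtain ⟨i, hs⟩ := Set.mem_iUnion.1 hs
      obtain ⟨M', hM', b, hbB, rfl⟩ := Set.mem_mul.1 hs
      rw [Set.mem_singleton_iff] at hM'
      subst hM'
      have hmem := Set.mul_mem_mul (Set.mul_mem_mul
        (Stmt9Aux.Umat_mem (m := m) (n := n) (p := p) (i.1:ℕ) (i.2.1:ℕ) (i.2.2:ℕ))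
        (Set.mem_singleton (Matrix.diagonal ![(p : ℚ_[p]) ^ 2, (p : ℚ_[p]), (p : ℚ_[p]), 1])))
        hbB
      have : Stmt9Aux.Umat p ((i.1:ℕ):ℚ_[p]) ((i.2.1:ℕ):ℚ_[p]) ((i.2.2:ℕ):ℚ_[p]) *
          Matrix.diagonal ![(p : ℚ_[p]) ^ 2, (p : ℚ_[p]), (p : ℚ_[p]), 1] * b = rep9 p i * b := by
        rw [hD, ← Stmt9Aux.rep9_eq]
      rwa [this] at hmem
  · intro i i' he
    simp only at he
    have h1 : rep9 p i ∈ ({rep9 p i} : Set (Matrix (Fin 4) (Fin 4) ℚ_[p])) * Bmn1 p m n :=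
      Set.mem_mul.2 ⟨rep9 p i, rfl, 1, Stmt9Aux.one_mem, mul_one _⟩
    rw [he] at h1
    obtain ⟨M', hM', b, hbB, hEq⟩ := Set.mem_mul.1 h1
    rw [Set.mem_singleton_iff] at hM'
    subst hM'
    obtain ⟨bE, -, -, -, -, -, -, -, -, -⟩ := hbB
    have hq : ((p:ℚ_[p])) ≠ 0 := Stmt9Aux.pq_ne
    -- entry equations
    have e33 : b 3 3 = 1 := by
      have e := congr_fun (congr_fun hEq 3) 3
      simp [rep9, Matrix.mul_apply, Fin.sum_univ_four, Matrix.vecHead, Matrix.vecTail] at e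
      linear_combination e
    have e23 : (p:ℚ_[p]) * b 2 3 = ((i'.1:ℕ):ℚ_[p]) - ((i.1:ℕ):ℚ_[p]) := by
      have e := congr_fun (congr_fun hEq 2) 3
      simp [rep9, Matrix.mul_apply, Fin.sum_univ_four, Matrix.vecHead, Matrix.vecTail] at e
      linear_combination e + (((i'.1:ℕ):ℚ_[p])) * e33
    have e13 : (p:ℚ_[p]) * b 1 3 = ((i.2.1:ℕ):ℚ_[p]) - ((i'.2.1:ℕ):ℚ_[p]) := by
      have e := congr_fun (congr_fun hEq 1) 3
      simp [rep9, Matrix.mul_apply, Fin.sum_univ_four, Matrix.vecHead, Matrix.vecTail] at e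
      linear_combination e - (((i'.2.1:ℕ):ℚ_[p])) * e33
    -- x component
    have hxd : ((p:ℤ)^1) ∣ ((i'.1:ℕ):ℤ) - ((i.1:ℕ):ℤ) := by
      rw [← Padic.norm_int_le_pow_iff_dvd]
      push_cast
      rw [← e23]
      exact Stmt9Aux.nmul₂ (by rw [Stmt9Aux.norm_p']) (bE 2 3)
    have hx : (i.1:ℕ) = (i'.1:ℕ) := by
      have h0 := Int.eq_zero_of_abs_lt_dvd (by simpa using hxd)
        (abs_lt.2 ⟨by have := i.1.isLt; omega, by have := i'.1.isLt; omega⟩)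
      omega
    have hyd : ((p:ℤ)^1) ∣ ((i.2.1:ℕ):ℤ) - ((i'.2.1:ℕ):ℤ) := by
      rw [← Padic.norm_int_le_pow_iff_dvd]
      push_cast
      rw [← e13]
      exact Stmt9Aux.nmul₂ (by rw [Stmt9Aux.norm_p']) (bE 1 3)
    have hy : (i.2.1:ℕ) = (i'.2.1:ℕ) := by
      have h0 := Int.eq_zero_of_abs_lt_dvd (by simpa using hyd)
        (abs_lt.2 ⟨by have := i'.2.1.isLt; omega, by have := i.2.1.isLt; omega⟩)
      omega
    -- z component
    have e03 : (p:ℚ_[p])^2 * b 0 3 = ((i.2.2:ℕ):ℚ_[p]) - ((i'.2.2:ℕ):ℚ_[p]) := by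
      have e := congr_fun (congr_fun hEq 0) 3
      simp [rep9, Matrix.mul_apply, Fin.sum_univ_four, Matrix.vecHead, Matrix.vecTail] at e
      have e13' : (p:ℚ_[p]) * b 1 3 = 0 := by rw [e13, hy]; ring
      have e23' : (p:ℚ_[p]) * b 2 3 = 0 := by rw [e23, hx]; ring
      linear_combination e - (((i'.2.2:ℕ):ℚ_[p])) * e33 - (((i'.1:ℕ):ℚ_[p])) * e13'
        - (((i'.2.1:ℕ):ℚ_[p])) * e23'
    have hzd : ((p:ℤ)^2) ∣ ((i.2.2:ℕ):ℤ) - ((i'.2.2:ℕ):ℤ) := by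
      rw [← Padic.norm_int_le_pow_iff_dvd]
      push_cast
      rw [← e03]
      refine Stmt9Aux.nmul₂ (le_of_eq ?_) (bE 0 3)
      rw [show ((p:ℚ_[p])^2) = (p:ℚ_[p])^(2:ℕ) by norm_num, Padic.norm_p_pow]
      norm_num
    have hz : (i.2.2:ℕ) = (i'.2.2:ℕ) := by
      have l1 : ((i.2.2:ℕ):ℤ) < (p:ℤ)^2 := by exact_mod_cast i.2.2.isLt
      have l2 : ((i'.2.2:ℕ):ℤ) < (p:ℤ)^2 := by exact_mod_cast i'.2.2.isLt
      have h0 := Int.eq_zero_of_abs_lt_dvd hzd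
        (abs_lt.2 ⟨by omega, by omega⟩)
      omega
    obtain ⟨a1, a2, a3⟩ := i
    obtain ⟨a1', a2', a3'⟩ := i'
    simp only [Prod.mk.injEq]
    exact ⟨Fin.ext hx, Fin.ext hy, Fin.ext hz⟩
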